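/- Let L > 0 and β ∈ ℝ^p with β ≠ 0, and let |β_(1)| ≥ |β_(2)| ≥ … ≥ |β_(p)| be the absolute values of its coordinates sorted in decreasing order, with k(β) the number of nonzero coordinates. Suppose q is an integer with 2 ≤ q ≤ k(β)+1 such that setting τ̂ = sqrt( (Σ_{j=1}^{q−1} β_(j)²) / (2Lp + L²(q−1)) ) one has |β_(q)|/L ≤ τ̂ ≤ |β_(q−1)|/L (where β_(k(β)+1) := 0). Then the minimum over τ > 0 of pτ + τ Σ_{j=1}^p B_L(β_j/τ) equals sqrt(2p/L + q − 1) · sqrt(Σ_{j=1}^{q−1} β_(j)²) + Σ_{j=q}^{k(β)} |β_(j)|. -/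

import Mathlib

set_option maxHeartbeats 1000000


noncomputable def berhu (L z : ℝ) : ℝ := if |z| ≤ L then |z| else (z ^ 2 + L ^ 2) / (2 * L)

lemma berhu_abs (L z : ℝ) : berhu L z = berhu L |z| := by
  simp [berhu, abs_abs, sq_abs]

lemma berhu_eval (L : ℝ) (hL : 0 < L) (τ : ℝ) (hτ : 0 < τ) (z : ℝ) (hz : 0 ≤ z) :
    τ * berhu L (z / τ) = if z ≤ L * τ then z else (z ^ 2 + L ^ 2 * τ ^ 2) / (2 * L * τ) := by
  have h0 : |z / τ| = z / τ := abs_of_nonneg (div_nonneg hz hτ.le)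
  by_cases h : z ≤ L * τ
  · rw [if_pos h]
    unfold berhu
    rw [h0, if_pos ((div_le_iff₀ hτ).mpr h)]
    field_simp
  · rw [if_neg h]
    unfold berhu
    rw [h0, if_neg (by rw [div_le_iff₀ hτ]; exact h)]
    field_simp

theorem berhu_pen_value (L : ℝ) (hL : 0 < L) (p : ℕ) (β : Fin p → ℝ) (hβ : β ≠ 0)
    (b : ℕ → ℝ) (σ : Equiv.Perm (Fin p))
    (hb : ∀ j : Fin p, b (j : ℕ) = |β (σ j)|)
    (hb0 : ∀ j : ℕ, p ≤ j → b j = 0)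
    (hsort : ∀ i j : ℕ, i ≤ j → b j ≤ b i)
    (k : ℕ) (hk : k = (Finset.univ.filter (fun j : Fin p => β j ≠ 0)).card)
    (q : ℕ) (hq2 : 2 ≤ q) (hqk : q ≤ k + 1)
    (τhat : ℝ)
    (hτhat : τhat =
      Real.sqrt ((∑ j ∈ Finset.range (q - 1), b j ^ 2) /
        (2 * L * p + L ^ 2 * (q - 1 : ℕ))))
    (hlo : b (q - 1) / L ≤ τhat) (hhi : τhat ≤ b (q - 2) / L) :
    IsLeast {y : ℝ | ∃ τ : ℝ, 0 < τ ∧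
        y = p * τ + τ * ∑ j : Fin p, berhu L (β j / τ)}
      (Real.sqrt (2 * p / L + (q : ℝ) - 1) *
          Real.sqrt (∑ j ∈ Finset.range (q - 1), b j ^ 2) +
        ∑ j ∈ Finset.Ico (q - 1) k, b j) := by
  -- basic positivity facts
  have hp : 0 < p := by
    rcases Nat.eq_zero_or_pos p with h | h
    · exfalso; apply hβ; subst h; funext i; exact i.elim0
    · exact h
  have hp' : (0 : ℝ) < p := by exact_mod_cast hp
  obtain ⟨i0, hi0⟩ : ∃ i, β i ≠ 0 := by
    by_contra h; push_neg at h; exact hβ (funext h)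
  have hbnn : ∀ j : ℕ, 0 ≤ b j := by
    intro j
    rcases lt_or_ge j p with h | h
    · rw [show j = ((⟨j, h⟩ : Fin p) : ℕ) from rfl, hb]; exact abs_nonneg _
    · rw [hb0 j h]
  have hkp : k ≤ p := by
    rw [hk]
    exact le_trans (Finset.card_filter_le _ _) (by simp)
  have hbk0 : ∀ j : ℕ, k ≤ j → b j = 0 := by
    intro j hj
    rcases le_or_gt p j with h | h
    · exact hb0 j h
    · have hkp' : k < p := lt_of_le_of_lt hj h
      have hbk : b k = 0 := by
        by_contra hne
        have hbkpos : 0 < b k := lt_of_le_of_ne (hbnn k) (Ne.symm hne)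
        have hcard : (Finset.range (k+1)).card ≤
            (Finset.univ.filter (fun j : Fin p => β j ≠ 0)).card := by
          apply Finset.card_le_card_of_injOn (fun i => σ ⟨i % p, Nat.mod_lt i hp⟩)
          · intro i hi
            rw [Finset.mem_coe, Finset.mem_range] at hi
            have hip : i < p := by omega
            have himod : i % p = i := Nat.mod_eq_of_lt hip
            simp only [Finset.mem_coe, Finset.mem_filter, Finset.mem_univ, true_and]
            intro h0
            have hbi := hb ⟨i % p, Nat.mod_lt i hp⟩
            rw [h0, abs_zero] at hbi
            simp only [himod] at hbi
            have h1 := hsort i k (by omega : i ≤ k)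
            rw [hbi] at h1
            linarith
          · intro x hx y hy hxy
            have hx' : x < k + 1 := by simpa using hx
            have hy' : y < k + 1 := by simpa using hy
            have hxp : x < p := by omega
            have hyp : y < p := by omega
            have := σ.injective hxy
            simpa [Fin.ext_iff, Nat.mod_eq_of_lt hxp, Nat.mod_eq_of_lt hyp] using this
        rw [Finset.card_range, ← hk] at hcard
        omega
      have h1 := hsort k j hj
      have h2 := hbnn j
      linarith
  set m : ℕ := q - 1 with hm
  have hm1 : 1 ≤ m := by omega
  have hmk : m ≤ k := by omega
  have hmp : m ≤ p := le_trans hmk hkp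
  set S : ℝ := ∑ j ∈ Finset.range m, b j ^ 2 with hSdef
  set T : ℝ := ∑ j ∈ Finset.Ico m k, b j with hTdef
  have hb0pos : 0 < b 0 := by
    have h1 := hb (σ.symm i0)
    rw [Equiv.apply_symm_apply] at h1
    have h2 : 0 < b ((σ.symm i0 : Fin p) : ℕ) := by rw [h1]; exact abs_pos.mpr hi0
    exact lt_of_lt_of_le h2 (hsort 0 _ (Nat.zero_le _))
  have hS : 0 < S := by
    have h0 : b 0 ^ 2 ≤ S :=
      Finset.single_le_sum (f := fun j => b j ^ 2) (fun i _ => sq_nonneg _)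
        (Finset.mem_range.mpr hm1)
    nlinarith
  set a : ℝ := (p : ℝ) + L * m / 2 with hadef
  have hm0 : (0 : ℝ) ≤ (m : ℝ) := Nat.cast_nonneg m
  have ha : 0 < a := by rw [hadef]; nlinarith
  have hden : 2 * L * (p : ℝ) + L ^ 2 * (m : ℝ) = 2 * L * a := by rw [hadef]; ring
  have hτpos : 0 < τhat := by
    rw [hτhat]
    apply Real.sqrt_pos.mpr
    rw [hden]
    exact div_pos hS (by positivity)
  have hτsq : τhat ^ 2 = S / (2 * L * a) := by
    rw [hτhat, Real.sq_sqrt, hden]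
    rw [hden]
    exact div_nonneg hS.le (by positivity)
  have hS2 : S = 2 * L * a * τhat ^ 2 := by
    rw [hτsq]; field_simp
  have hτm : L * τhat ≤ b (m - 1) := by
    have h1 := (le_div_iff₀ hL).mp hhi
    have h2 : q - 2 = m - 1 := by omega
    rw [h2] at h1
    linarith
  have hτq : b m ≤ L * τhat := by
    have h1 := (div_le_iff₀ hL).mp hlo
    linarith
  -- the optimal value
  have hqm : ((m : ℝ)) = (q : ℝ) - 1 := by
    have h1 : m + 1 = q := by omega
    rw [← h1]; push_cast; ring
  have hC : Real.sqrt (2 * (p : ℝ) / L + (q : ℝ) - 1) * Real.sqrt S = 2 * a * τhat := by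
    have he : 2 * (p : ℝ) / L + (q : ℝ) - 1 = 2 * (p : ℝ) / L + (m : ℝ) := by rw [hqm]; ring
    rw [he, ← Real.sqrt_mul (add_nonneg (div_nonneg (by positivity) hL.le) hm0)]
    have h2 : (2 * (p : ℝ) / L + (m : ℝ)) * S = (2 * a * τhat) ^ 2 := by
      rw [hS2, hadef]; field_simp
    rw [h2, Real.sqrt_sq (by positivity)]
  -- rewriting the sum via the permutation
  have hsum : ∀ τ : ℝ, 0 < τ →
      (∑ j : Fin p, berhu L (β j / τ)) = ∑ j ∈ Finset.range p, berhu L (b j / τ) := by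
    intro τ hτ
    rw [← Equiv.sum_comp σ (fun j => berhu L (β j / τ))]
    rw [← Fin.sum_univ_eq_sum_range (fun j => berhu L (b j / τ)) p]
    apply Finset.sum_congr rfl
    intro j _
    rw [hb j, berhu_abs L (β (σ j) / τ), abs_div, abs_of_pos hτ]
  -- the key lower bound
  have key : ∀ τ : ℝ, 0 < τ →
      2 * a * τhat + T ≤ (p : ℝ) * τ + τ * ∑ j : Fin p, berhu L (β j / τ) := by
    intro τ hτ
    rw [hsum τ hτ, Finset.mul_sum,
      ← Finset.sum_range_add_sum_Ico (fun j => τ * berhu L (b j / τ)) hmp]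
    have h1 : ∑ j ∈ Finset.range m,
        ((b j ^ 2 + L ^ 2 * τ ^ 2) / (2 * L * τ) - L * (τ - τhat) ^ 2 / (2 * τ))
        ≤ ∑ j ∈ Finset.range m, τ * berhu L (b j / τ) := by
      apply Finset.sum_le_sum
      intro j hj
      rw [Finset.mem_range] at hj
      have hbj : L * τhat ≤ b j := le_trans hτm (hsort j (m - 1) (by omega))
      rw [berhu_eval L hL τ hτ (b j) (hbnn j)]
      split_ifs with h
      · have hsq : 0 ≤ (L * (τ - τhat)) ^ 2 - (b j - L * τ) ^ 2 := by
          nlinarith [mul_nonneg (show (0:ℝ) ≤ 2 * L * τ - L * τhat - b j by linarith)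
            (show (0:ℝ) ≤ b j - L * τhat by linarith)]
        have hkey : b j - ((b j ^ 2 + L ^ 2 * τ ^ 2) / (2 * L * τ) - L * (τ - τhat) ^ 2 / (2 * τ))
            = ((L * (τ - τhat)) ^ 2 - (b j - L * τ) ^ 2) / (2 * L * τ) := by
          field_simp; ring
        have h5 : 0 ≤ b j -
            ((b j ^ 2 + L ^ 2 * τ ^ 2) / (2 * L * τ) - L * (τ - τhat) ^ 2 / (2 * τ)) := by
          rw [hkey]; exact div_nonneg hsq (by positivity)
        linarith
      · have h6 : 0 ≤ L * (τ - τhat) ^ 2 / (2 * τ) := by positivity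
        linarith
    have h2 : T ≤ ∑ j ∈ Finset.Ico m p, τ * berhu L (b j / τ) := by
      have h3 : ∑ j ∈ Finset.Ico m p, b j ≤ ∑ j ∈ Finset.Ico m p, τ * berhu L (b j / τ) := by
        apply Finset.sum_le_sum
        intro j _
        rw [berhu_eval L hL τ hτ (b j) (hbnn j)]
        split_ifs with h
        · exact le_refl _
        · rw [le_div_iff₀ (by positivity)]
          nlinarith [sq_nonneg (b j - L * τ), hbnn j]
      have h5 : ∑ j ∈ Finset.Ico m p, b j = T := by
        rw [hTdef, ← Finset.sum_Ico_consecutive (fun j => b j) hmk hkp]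
        have h6 : ∑ j ∈ Finset.Ico k p, b j = 0 :=
          Finset.sum_eq_zero (fun j hj => hbk0 j (Finset.mem_Ico.mp hj).1)
        rw [h6, add_zero]
      rw [← h5]; exact h3
    have h6 : ∑ j ∈ Finset.range m,
        ((b j ^ 2 + L ^ 2 * τ ^ 2) / (2 * L * τ) - L * (τ - τhat) ^ 2 / (2 * τ))
        = S / (2 * L * τ) + (m : ℝ) * (L ^ 2 * τ ^ 2) / (2 * L * τ)
          - (m : ℝ) * (L * (τ - τhat) ^ 2 / (2 * τ)) := by
      rw [Finset.sum_sub_distrib, Finset.sum_const, Finset.card_range, nsmul_eq_mul]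
      congr 1
      rw [← Finset.sum_div, Finset.sum_add_distrib, Finset.sum_const, Finset.card_range,
        nsmul_eq_mul, ← hSdef, add_div, mul_div_assoc]
    rw [h6] at h1
    have hid : (p : ℝ) * τ + (S / (2 * L * τ) + (m : ℝ) * (L ^ 2 * τ ^ 2) / (2 * L * τ)
          - (m : ℝ) * (L * (τ - τhat) ^ 2 / (2 * τ))) - 2 * a * τhat
        = (p : ℝ) * (τ - τhat) ^ 2 / τ + (S - 2 * L * a * τhat ^ 2) / (2 * L * τ) := by
      rw [hadef]; field_simp; ring
    have h8 : 0 ≤ (p : ℝ) * (τ - τhat) ^ 2 / τ := by positivity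
    have h9 : (S - 2 * L * a * τhat ^ 2) / (2 * L * τ) = 0 := by
      rw [hS2]; simp
    linarith
  constructor
  · refine ⟨τhat, hτpos, ?_⟩
    rw [hC]
    -- show 2 a τ̂ + T = p τ̂ + τ̂ Σ
    rw [hsum τhat hτpos, Finset.mul_sum,
      ← Finset.sum_range_add_sum_Ico (fun j => τhat * berhu L (b j / τhat)) hmp]
    have h1 : ∑ j ∈ Finset.range m, τhat * berhu L (b j / τhat)
        = ∑ j ∈ Finset.range m, (b j ^ 2 + L ^ 2 * τhat ^ 2) / (2 * L * τhat) := by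
      apply Finset.sum_congr rfl
      intro j hj
      rw [Finset.mem_range] at hj
      have hbj : L * τhat ≤ b j := le_trans hτm (hsort j (m - 1) (by omega))
      rw [berhu_eval L hL τhat hτpos (b j) (hbnn j)]
      split_ifs with h
      · have hbe : b j = L * τhat := le_antisymm h hbj
        rw [hbe]; field_simp; ring
      · rfl
    have h2 : ∑ j ∈ Finset.Ico m p, τhat * berhu L (b j / τhat) = T := by
      rw [← Finset.sum_Ico_consecutive (fun j => τhat * berhu L (b j / τhat)) hmk hkp]
      have h3 : ∑ j ∈ Finset.Ico k p, τhat * berhu L (b j / τhat) = 0 := by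
        apply Finset.sum_eq_zero
        intro j hj
        rw [Finset.mem_Ico] at hj
        rw [berhu_eval L hL τhat hτpos (b j) (hbnn j),
          if_pos (by rw [hbk0 j hj.1]; positivity), hbk0 j hj.1]
      have h4 : ∑ j ∈ Finset.Ico m k, τhat * berhu L (b j / τhat) = T := by
        rw [hTdef]
        apply Finset.sum_congr rfl
        intro j hj
        rw [Finset.mem_Ico] at hj
        have hbj : b j ≤ L * τhat := le_trans (hsort m j hj.1) hτq
        rw [berhu_eval L hL τhat hτpos (b j) (hbnn j), if_pos hbj]
      rw [h3, h4, add_zero]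
    have hqsum : ∑ j ∈ Finset.range m, (b j ^ 2 + L ^ 2 * τhat ^ 2) / (2 * L * τhat)
        = S / (2 * L * τhat) + (m : ℝ) * (L ^ 2 * τhat ^ 2) / (2 * L * τhat) := by
      rw [← Finset.sum_div, Finset.sum_add_distrib, Finset.sum_const, Finset.card_range,
        nsmul_eq_mul, ← hSdef, add_div, mul_div_assoc]
    rw [h1, h2, hqsum, hS2, hadef]
    field_simp
    ring
  · rintro y ⟨τ, hτ, rfl⟩
    rw [hC]
    exact key τ hτ
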